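/- Let x₀ ≠ y₀ in ℝⁿ, let e be a unit vector orthogonal to N(x₀,y₀), r₀ = ‖y₀-x₀‖, and s ∈ [0, r₀]. Then the derivative at t = 0 of t ↦ θ(s, x₀ + t·e, y₀ - t·e), where θ(s,x,y) = x + s·N(x,y), equals (1 - 2s/r₀)·e. -/

import Mathlib

open scoped RealInnerProductSpace

theorem stmt3 {n : ℕ} (x₀ y₀ : EuclideanSpace ℝ (Fin n)) (hxy : x₀ ≠ y₀)
    (e : EuclideanSpace ℝ (Fin n)) (he : ‖e‖ = 1)
    (horth : (inner ℝ e (‖y₀ - x₀‖⁻¹ • (y₀ - x₀)) : ℝ) = 0)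
    (s : ℝ) (hs : s ∈ Set.Icc 0 ‖y₀ - x₀‖) :
    deriv (fun t : ℝ =>
      (x₀ + t • e) + s • (‖(y₀ - t • e) - (x₀ + t • e)‖⁻¹ • ((y₀ - t • e) - (x₀ + t • e)))) 0
      = (1 - 2 * s / ‖y₀ - x₀‖) • e := by
  set v : EuclideanSpace ℝ (Fin n) := y₀ - x₀ with hv
  have hv0 : v ≠ 0 := sub_ne_zero.2 (Ne.symm hxy)
  have hr0 : ‖v‖ ≠ 0 := norm_ne_zero_iff.2 hv0
  have hev : (inner ℝ e v : ℝ) = 0 := by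
    rw [inner_smul_right] at horth
    exact (mul_eq_zero.1 horth).resolve_left (inv_ne_zero hr0)
  -- g t = v - (2t) • e
  set g : ℝ → EuclideanSpace ℝ (Fin n) := fun t => v - (2 * t) • e with hg
  have hgeq : ∀ t : ℝ, (y₀ - t • e) - (x₀ + t • e) = g t := by
    intro t
    simp only [hg, hv, two_mul, add_smul]
    abel
  have hg0 : g 0 = v := by simp [hg]
  have hgd : HasDerivAt g (-((2:ℝ) • e)) 0 := by
    have h1 : HasDerivAt (fun t : ℝ => (2 * t) • e) ((2:ℝ) • e) 0 := by
      simpa using ((hasDerivAt_id (0:ℝ)).const_mul (2:ℝ)).smul_const e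
    have := (hasDerivAt_const (0:ℝ) v).sub h1
    simp at this
    exact this
  -- norm function
  have hinner : HasDerivAt (fun t => (inner ℝ (g t) (g t) : ℝ)) 0 0 := by
    have h := hgd.inner ℝ hgd
    have hz : (inner ℝ (g 0) (-((2:ℝ) • e)) : ℝ) + (inner ℝ (-((2:ℝ) • e)) (g 0) : ℝ) = 0 := by
      rw [hg0, inner_neg_left, inner_neg_right, real_inner_smul_left, real_inner_smul_right,
        real_inner_comm, hev]
      ring
    rw [hz] at h
    exact h
  have hnorm : HasDerivAt (fun t => ‖g t‖) 0 0 := by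
    have hsq : HasDerivAt (fun t => Real.sqrt (inner ℝ (g t) (g t) : ℝ)) 0 0 := by
      have hne : (inner ℝ (g 0) (g 0) : ℝ) ≠ 0 := by
        rw [hg0]
        rw [real_inner_self_eq_norm_sq]
        exact pow_ne_zero 2 hr0
      have := (Real.hasDerivAt_sqrt hne).comp 0 hinner
      exact this.congr_deriv (by simp)
    convert hsq using 2 with t
    rw [real_inner_self_eq_norm_sq, Real.sqrt_sq (norm_nonneg _)]
  have hninv : HasDerivAt (fun t => ‖g t‖⁻¹) 0 0 := by
    have := hnorm.inv (by simpa [hg0] using hr0)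
    simp at this ⊢
    exact this
  have hB : HasDerivAt (fun t => ‖g t‖⁻¹ • g t) (‖v‖⁻¹ • (-((2:ℝ) • e))) 0 := by
    have := hninv.smul hgd
    simp [hg0] at this ⊢
    exact this
  have hA : HasDerivAt (fun t : ℝ => x₀ + t • e) e 0 := by
    exact ((hasDerivAt_const (0:ℝ) x₀).add ((hasDerivAt_id (0:ℝ)).smul_const e)).congr_deriv (by simp)
  have hF : HasDerivAt (fun t : ℝ =>
      (x₀ + t • e) + s • (‖(y₀ - t • e) - (x₀ + t • e)‖⁻¹ • ((y₀ - t • e) - (x₀ + t • e))))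
      (e + s • (‖v‖⁻¹ • (-((2:ℝ) • e)))) 0 := by
    have := hA.add (hB.const_smul s)
    simp only [hgeq] at this ⊢
    exact this
  rw [hF.deriv]
  rw [smul_neg, smul_smul, smul_neg, smul_smul, ← sub_eq_add_neg, sub_smul, one_smul]
  congr 2
  field_simp
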